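/- Radial reduction of the weight-2ℓ Laplacian: let ℓ ∈ ℤ, fix w ∈ H², and let p : (0,∞) → ℂ be twice differentiable. For z = x + iy ∈ H² set ϱ = ϱ(z,w) = |z−w|²/(4·Im z·Im w) and define F(x,y) := p(ϱ(x+iy,w))·H_ℓ(x+iy,w). Then for every z = x + iy ∈ H² with z ≠ w: −y²·(∂²F/∂x² + ∂²F/∂y²)(x,y) + 2iℓy·(∂F/∂x)(x,y) = −[ (ϱ²+ϱ)·p″(ϱ) + (2ϱ+1)·p′(ϱ) + (ℓ²/(ϱ+1))·p(ϱ) ] · H_ℓ(z,w). -/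

import Mathlib

/-- The point-pair invariant ϱ(z,w) = |z−w|²/(4·Im z·Im w). -/
noncomputable def rhoInv (z w : ℂ) : ℝ :=
  ‖z - w‖ ^ 2 / (4 * z.im * w.im)

/-- The factor H_ℓ(z,w) = ((z̄−w)/(w̄−z))^ℓ. -/
noncomputable def Hfac (ℓ : ℤ) (z w : ℂ) : ℂ :=
  (((starRingEnd ℂ) z - w) / ((starRingEnd ℂ) w - z)) ^ ℓ

/-- The function F(x,y) = p(ϱ(x+iy,w))·H_ℓ(x+iy,w). -/
noncomputable def radialF (p : ℝ → ℂ) (ℓ : ℤ) (w : ℂ) (x y : ℝ) : ℂ :=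
  p (rhoInv ((x : ℂ) + (y : ℂ) * Complex.I) w) * Hfac ℓ ((x : ℂ) + (y : ℂ) * Complex.I) w

open Complex

lemma rho_eq (w : ℂ) (x y : ℝ) :
    rhoInv ((x : ℂ) + (y : ℂ) * Complex.I) w
      = ((x - w.re)^2 + (y - w.im)^2) / (4 * y * w.im) := by
  have h1 : ((x : ℂ) + (y : ℂ) * Complex.I - w).re = x - w.re := by simp
  have h2 : ((x : ℂ) + (y : ℂ) * Complex.I - w).im = y - w.im := by simp
  rw [rhoInv, Complex.sq_norm, Complex.normSq_apply, h1, h2]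
  simp [pow_two]

lemma rho_pos (w : ℂ) (hv : 0 < w.im) (x y : ℝ) (hy : 0 < y)
    (hzw : (x : ℂ) + (y : ℂ) * Complex.I ≠ w) :
    0 < rhoInv ((x : ℂ) + (y : ℂ) * Complex.I) w := by
  rw [rho_eq]
  apply div_pos _ (by positivity)
  rcases eq_or_ne x w.re with hx | hx
  · have hyv : y - w.im ≠ 0 := by
      intro h; apply hzw
      have : y = w.im := by linarith
      rw [hx, this, Complex.re_add_im]
    positivity
  · have hx' : x - w.re ≠ 0 := sub_ne_zero.2 hx
    positivity

lemma hasDerivAt_rho_x (w : ℂ) (y : ℝ) (x : ℝ) :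
    HasDerivAt (fun t : ℝ => rhoInv ((t : ℂ) + (y : ℂ) * Complex.I) w)
      ((x - w.re) / (2 * y * w.im)) x := by
  simp only [rho_eq]
  have h := ((((hasDerivAt_id x).sub_const w.re).pow 2).add_const
      ((y - w.im)^2)).div_const (4 * y * w.im)
  simp only [id_eq] at h
  refine h.congr_deriv ?_
  push_cast
  ring

lemma hasDerivAt_rho_y (w : ℂ) (hv : 0 < w.im) (x : ℝ) (y : ℝ) (hy : 0 < y) :
    HasDerivAt (fun t : ℝ => rhoInv ((x : ℂ) + (t : ℂ) * Complex.I) w)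
      ((2 * (y - w.im) * y - ((x - w.re)^2 + (y - w.im)^2)) / (4 * w.im * y^2)) y := by
  simp only [rho_eq]
  have hnum : HasDerivAt (fun t : ℝ => (x - w.re)^2 + (t - w.im)^2)
      (2 * (y - w.im)) y := by
    have h := (((hasDerivAt_id y).sub_const w.im).pow 2).const_add ((x - w.re)^2)
    simp only [id_eq] at h
    refine h.congr_deriv ?_
    push_cast
    ring
  have hden : HasDerivAt (fun t : ℝ => 4 * t * w.im) (4 * w.im) y := by
    have h := ((hasDerivAt_id y).const_mul 4).mul_const w.im
    refine h.congr_deriv ?_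
    ring
  have hden0 : 4 * y * w.im ≠ 0 := by positivity
  have h := hnum.div hden hden0
  refine h.congr_deriv ?_
  field_simp

lemma zpow_helper (ℓ : ℤ) (A C : ℂ) (hA : A ≠ 0) (hC : C ≠ 0) :
    (ℓ : ℂ) * (A / C) ^ (ℓ - 1) * ((1 * C - A * -1) / C ^ 2)
      = (A / C) ^ ℓ * ((ℓ : ℂ) * (A + C) / (A * C)) := by
  have hB : A / C ≠ 0 := div_ne_zero hA hC
  rw [zpow_sub_one₀ hB, inv_div]
  set P := (A / C) ^ ℓ with hP
  field_simp
  ring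

lemma zpow_helper2 (ℓ : ℤ) (A C : ℂ) (hA : A ≠ 0) (hC : C ≠ 0) :
    (ℓ : ℂ) * (A / C) ^ (ℓ - 1) * ((-(1 * I) * C - A * -(1 * I)) / C ^ 2)
      = (A / C) ^ ℓ * ((ℓ : ℂ) * (-I) * (C - A) / (A * C)) := by
  have hB : A / C ≠ 0 := div_ne_zero hA hC
  rw [zpow_sub_one₀ hB, inv_div]
  set P := (A / C) ^ ℓ with hP
  field_simp
  ring

lemma hasDerivAt_Hfac_x (ℓ : ℤ) (w : ℂ) (hv : 0 < w.im) (y : ℝ) (hy : 0 < y) (x : ℝ) :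
    HasDerivAt (fun t : ℝ => Hfac ℓ ((t : ℂ) + (y : ℂ) * Complex.I) w)
      (Hfac ℓ ((x : ℂ) + (y : ℂ) * Complex.I) w *
        (2 * Complex.I * (ℓ : ℂ) * ((y + w.im : ℝ) : ℂ) /
          ((((x - w.re)^2 + (y + w.im)^2 : ℝ)) : ℂ))) x := by
  set u := w.re
  set v := w.im
  have hw_eq : w = (u : ℂ) + (v : ℂ) * I := (Complex.re_add_im w).symm
  have hcw : (starRingEnd ℂ) w = (u : ℂ) - (v : ℂ) * I := by
    rw [hw_eq]; simp [Complex.ext_iff]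
  set A : ℂ → ℂ := fun ζ => ζ - (y : ℂ) * I - w with hAdef
  set C : ℂ → ℂ := fun ζ => (starRingEnd ℂ) w - ζ - (y : ℂ) * I with hCdef
  have hA0 : A (x : ℂ) ≠ 0 := by
    intro h
    have := congrArg Complex.im h
    simp [hAdef, hw_eq] at this
    linarith
  have hC0 : C (x : ℂ) ≠ 0 := by
    intro h
    have := congrArg Complex.im h
    simp [hCdef, hcw] at this
    linarith
  have hA : HasDerivAt A 1 (x : ℂ) :=
    ((hasDerivAt_id _).sub_const _).sub_const _
  have hC : HasDerivAt C (-1) (x : ℂ) := by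
    have := ((hasDerivAt_id ((x : ℝ) : ℂ)).const_sub ((starRingEnd ℂ) w)).sub_const
      ((y : ℂ) * I)
    exact this
  have hB : HasDerivAt (fun ζ => A ζ / C ζ)
      ((1 * C (x : ℂ) - A (x : ℂ) * -1) / C (x : ℂ) ^ 2) (x : ℂ) := hA.div hC hC0
  have hB0 : A (x : ℂ) / C (x : ℂ) ≠ 0 := div_ne_zero hA0 hC0
  have hzp := (hasDerivAt_zpow ℓ _ (Or.inl hB0)).comp ((x : ℝ) : ℂ) hB
  have hfin := hzp.comp_ofReal
  have hfun : (fun t : ℝ => ((fun ζ => ζ ^ ℓ) ∘ fun ζ => A ζ / C ζ) (t : ℂ))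
      = fun t : ℝ => Hfac ℓ ((t : ℂ) + (y : ℂ) * Complex.I) w := by
    funext t
    have hconjz : (starRingEnd ℂ) ((t : ℂ) + (y : ℂ) * I) = (t : ℂ) - (y : ℂ) * I := by
      simp [Complex.ext_iff]
    simp only [Function.comp, Hfac, hconjz, hAdef, hCdef, sub_sub]
  have hACm : A (x : ℂ) * C (x : ℂ) = -((((x - u)^2 + (y + v)^2 : ℝ)) : ℂ) := by
    simp only [hAdef, hCdef]
    rw [hcw, hw_eq]
    push_cast
    linear_combination (((y:ℂ) + ↑v)^2) * Complex.I_sq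
  have hApC : A (x : ℂ) + C (x : ℂ) = -2 * I * ((y : ℂ) + v) := by
    simp only [hAdef, hCdef]
    rw [hcw, hw_eq]
    ring
  have hH : Hfac ℓ ((x : ℂ) + (y : ℂ) * Complex.I) w = (A (x:ℂ) / C (x:ℂ)) ^ ℓ := by
    have hconjz : (starRingEnd ℂ) ((x : ℂ) + (y : ℂ) * I) = (x : ℂ) - (y : ℂ) * I := by
      simp [Complex.ext_iff]
    simp only [Hfac, hconjz, hAdef, hCdef, sub_sub]
  have hval : (ℓ : ℂ) * (A (x:ℂ) / C (x:ℂ)) ^ (ℓ - 1) *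
        ((1 * C (x : ℂ) - A (x : ℂ) * -1) / C (x : ℂ) ^ 2)
      = Hfac ℓ ((x : ℂ) + (y : ℂ) * Complex.I) w *
        (2 * Complex.I * (ℓ : ℂ) * ((y + v : ℝ) : ℂ) /
          ((((x - u)^2 + (y + v)^2 : ℝ)) : ℂ)) := by
    rw [zpow_helper ℓ _ _ hA0 hC0, hH, hACm, hApC]
    push_cast
    rw [div_neg, mul_div_assoc, mul_div_assoc]
    ring
  rw [hfun, hval] at hfin
  exact hfin

lemma hasDerivAt_Hfac_y (ℓ : ℤ) (w : ℂ) (hv : 0 < w.im) (x : ℝ) (y : ℝ) (hy : 0 < y) :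
    HasDerivAt (fun t : ℝ => Hfac ℓ ((x : ℂ) + (t : ℂ) * Complex.I) w)
      (Hfac ℓ ((x : ℂ) + (y : ℂ) * Complex.I) w *
        (-2 * Complex.I * (ℓ : ℂ) * ((x - w.re : ℝ) : ℂ) /
          ((((x - w.re)^2 + (y + w.im)^2 : ℝ)) : ℂ))) y := by
  set u := w.re
  set v := w.im
  have hw_eq : w = (u : ℂ) + (v : ℂ) * I := (Complex.re_add_im w).symm
  have hcw : (starRingEnd ℂ) w = (u : ℂ) - (v : ℂ) * I := by
    rw [hw_eq]; simp [Complex.ext_iff]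
  set A : ℂ → ℂ := fun ζ => (x : ℂ) - ζ * I - w with hAdef
  set C : ℂ → ℂ := fun ζ => (starRingEnd ℂ) w - (x : ℂ) - ζ * I with hCdef
  have hA0 : A (y : ℂ) ≠ 0 := by
    intro h
    have := congrArg Complex.im h
    simp [hAdef, hw_eq] at this
    linarith
  have hC0 : C (y : ℂ) ≠ 0 := by
    intro h
    have := congrArg Complex.im h
    simp [hCdef, hcw] at this
    linarith
  have hA : HasDerivAt A (-(1 * I)) (y : ℂ) :=
    (((hasDerivAt_id _).mul_const I).const_sub _).sub_const _
  have hC : HasDerivAt C (-(1 * I)) (y : ℂ) := by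
    have h2 : (fun ζ : ℂ => (starRingEnd ℂ) w - (x : ℂ) - ζ * I)
        = fun ζ : ℂ => ((starRingEnd ℂ) w - (x : ℂ)) - ζ * I := by
      funext ζ; ring
    rw [hCdef, h2]
    exact ((hasDerivAt_id ((y : ℝ) : ℂ)).mul_const I).const_sub _
  have hB : HasDerivAt (fun ζ : ℂ => A ζ / C ζ)
      ((-(1 * I) * C (y : ℂ) - A (y : ℂ) * -(1 * I)) / C (y : ℂ) ^ 2) (y : ℂ) :=
    hA.div hC hC0
  have hB0 : A (y : ℂ) / C (y : ℂ) ≠ 0 := div_ne_zero hA0 hC0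
  have hzp := (hasDerivAt_zpow ℓ _ (Or.inl hB0)).comp ((y : ℝ) : ℂ) hB
  have hfin := hzp.comp_ofReal
  have hfun : (fun t : ℝ => ((fun ζ => ζ ^ ℓ) ∘ fun ζ => A ζ / C ζ) (t : ℂ))
      = fun t : ℝ => Hfac ℓ ((x : ℂ) + (t : ℂ) * Complex.I) w := by
    funext t
    have hconjz : (starRingEnd ℂ) ((x : ℂ) + (t : ℂ) * I) = (x : ℂ) - (t : ℂ) * I := by
      simp [Complex.ext_iff]
    simp only [Function.comp, Hfac, hconjz, hAdef, hCdef, sub_sub]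
  have hACm : A (y : ℂ) * C (y : ℂ) = -((((x - u)^2 + (y + v)^2 : ℝ)) : ℂ) := by
    simp only [hAdef, hCdef]
    rw [hcw, hw_eq]
    push_cast
    linear_combination (((y:ℂ) + ↑v)^2) * Complex.I_sq
  have hCmA : C (y : ℂ) - A (y : ℂ) = ((2 * u - 2 * x : ℝ) : ℂ) := by
    simp only [hAdef, hCdef]
    rw [hcw, hw_eq]
    push_cast
    ring
  have hH : Hfac ℓ ((x : ℂ) + (y : ℂ) * Complex.I) w = (A (y:ℂ) / C (y:ℂ)) ^ ℓ := by
    have hconjz : (starRingEnd ℂ) ((x : ℂ) + (y : ℂ) * I) = (x : ℂ) - (y : ℂ) * I := by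
      simp [Complex.ext_iff]
    simp only [Hfac, hconjz, hAdef, hCdef, sub_sub]
  have hval : (ℓ : ℂ) * (A (y:ℂ) / C (y:ℂ)) ^ (ℓ - 1) *
        ((-(1 * I) * C (y : ℂ) - A (y : ℂ) * -(1 * I)) / C (y : ℂ) ^ 2)
      = Hfac ℓ ((x : ℂ) + (y : ℂ) * Complex.I) w *
        (-2 * Complex.I * (ℓ : ℂ) * ((x - u : ℝ) : ℂ) /
          ((((x - u)^2 + (y + v)^2 : ℝ)) : ℂ)) := by
    rw [zpow_helper2 ℓ _ _ hA0 hC0, hH, hACm, hCmA]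
    push_cast
    rw [div_neg, mul_div_assoc, mul_div_assoc]
    ring
  rw [hfun, hval] at hfin
  exact hfin

lemma hasDerivAt_F_x (ℓ : ℤ) (w : ℂ) (hv : 0 < w.im) (p p' : ℝ → ℂ)
    (hp : ∀ r : ℝ, 0 < r → HasDerivAt p (p' r) r)
    (y : ℝ) (hy : 0 < y) (t : ℝ)
    (ht : 0 < rhoInv ((t : ℂ) + (y : ℂ) * Complex.I) w) :
    HasDerivAt (fun s : ℝ => radialF p ℓ w s y)
      (Hfac ℓ ((t : ℂ) + (y : ℂ) * Complex.I) w *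
        ((((t - w.re) / (2 * y * w.im) : ℝ) : ℂ) * p' (rhoInv ((t : ℂ) + (y : ℂ) * Complex.I) w)
          + p (rhoInv ((t : ℂ) + (y : ℂ) * Complex.I) w) *
            (2 * Complex.I * (ℓ : ℂ) * ((y + w.im : ℝ) : ℂ) /
              ((((t - w.re)^2 + (y + w.im)^2 : ℝ)) : ℂ)))) t := by
  have h1 : HasDerivAt (fun s : ℝ => p (rhoInv ((s : ℂ) + (y : ℂ) * Complex.I) w))
      (((t - w.re) / (2 * y * w.im)) • p' (rhoInv ((t : ℂ) + (y : ℂ) * Complex.I) w)) t :=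
    (hp _ ht).scomp t (hasDerivAt_rho_x w y t)
  have h2 := h1.mul (hasDerivAt_Hfac_x ℓ w hv y hy t)
  refine h2.congr_deriv ?_
  rw [Complex.real_smul]
  ring

lemma hasDerivAt_F_y (ℓ : ℤ) (w : ℂ) (hv : 0 < w.im) (p p' : ℝ → ℂ)
    (hp : ∀ r : ℝ, 0 < r → HasDerivAt p (p' r) r)
    (x : ℝ) (t : ℝ) (ht0 : 0 < t)
    (ht : 0 < rhoInv ((x : ℂ) + (t : ℂ) * Complex.I) w) :
    HasDerivAt (fun s : ℝ => radialF p ℓ w x s)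
      (Hfac ℓ ((x : ℂ) + (t : ℂ) * Complex.I) w *
        ((((2 * (t - w.im) * t - ((x - w.re)^2 + (t - w.im)^2)) / (4 * w.im * t^2) : ℝ) : ℂ) *
            p' (rhoInv ((x : ℂ) + (t : ℂ) * Complex.I) w)
          + p (rhoInv ((x : ℂ) + (t : ℂ) * Complex.I) w) *
            (-2 * Complex.I * (ℓ : ℂ) * ((x - w.re : ℝ) : ℂ) /
              ((((x - w.re)^2 + (t + w.im)^2 : ℝ)) : ℂ)))) t := by
  have h1 : HasDerivAt (fun s : ℝ => p (rhoInv ((x : ℂ) + (s : ℂ) * Complex.I) w))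
      (((2 * (t - w.im) * t - ((x - w.re)^2 + (t - w.im)^2)) / (4 * w.im * t^2)) •
        p' (rhoInv ((x : ℂ) + (t : ℂ) * Complex.I) w)) t :=
    (hp _ ht).scomp t (hasDerivAt_rho_y w hv x t ht0)
  have h2 := h1.mul (hasDerivAt_Hfac_y ℓ w hv x t ht0)
  refine h2.congr_deriv ?_
  rw [Complex.real_smul]
  ring

set_option maxHeartbeats 2000000 in
/-- Radial reduction of the weight-2ℓ Laplacian. -/
theorem radial_reduction_weight_laplacian (ℓ : ℤ) (w : ℂ) (hw : 0 < w.im)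
    (p p' p'' : ℝ → ℂ)
    (hp : ∀ r : ℝ, 0 < r → HasDerivAt p (p' r) r)
    (hp' : ∀ r : ℝ, 0 < r → HasDerivAt p' (p'' r) r) :
    ∀ x y : ℝ, 0 < y → (x : ℂ) + (y : ℂ) * Complex.I ≠ w →
      -(y : ℂ) ^ 2 *
            (deriv (fun x' : ℝ => deriv (fun x'' : ℝ => radialF p ℓ w x'' y) x') x +
              deriv (fun y' : ℝ => deriv (fun y'' : ℝ => radialF p ℓ w x y'') y') y) +
          2 * Complex.I * (ℓ : ℂ) * (y : ℂ) * deriv (fun x' : ℝ => radialF p ℓ w x' y) x =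
        -((((rhoInv ((x : ℂ) + (y : ℂ) * Complex.I) w ^ 2 +
                  rhoInv ((x : ℂ) + (y : ℂ) * Complex.I) w : ℝ) : ℂ) *
                p'' (rhoInv ((x : ℂ) + (y : ℂ) * Complex.I) w) +
              ((2 * rhoInv ((x : ℂ) + (y : ℂ) * Complex.I) w + 1 : ℝ) : ℂ) *
                p' (rhoInv ((x : ℂ) + (y : ℂ) * Complex.I) w) +
              (ℓ : ℂ) ^ 2 / (((rhoInv ((x : ℂ) + (y : ℂ) * Complex.I) w : ℝ) : ℂ) + 1) *
                p (rhoInv ((x : ℂ) + (y : ℂ) * Complex.I) w)) *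
            Hfac ℓ ((x : ℂ) + (y : ℂ) * Complex.I) w) := by
  intro x y hy hzw
  have hρ : 0 < rhoInv ((x : ℂ) + (y : ℂ) * Complex.I) w := rho_pos w hw x y hy hzw
  have hv := hw
  have hD : (0:ℝ) < (x - w.re)^2 + (y + w.im)^2 := by positivity
  have hD0 : ((((x - w.re)^2 + (y + w.im)^2 : ℝ)) : ℂ) ≠ 0 := by exact_mod_cast hD.ne'
  -- first derivative in x
  have hd1 := (hasDerivAt_F_x ℓ w hw p p' hp y hy x hρ).deriv
  -- second derivative in x
  have hevρ : ∀ᶠ t : ℝ in nhds x, 0 < rhoInv ((t : ℂ) + (y : ℂ) * Complex.I) w :=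
    (hasDerivAt_rho_x w y x).continuousAt.eventually (eventually_gt_nhds hρ)
  have hev : (fun x' : ℝ => deriv (fun x'' : ℝ => radialF p ℓ w x'' y) x') =ᶠ[nhds x]
      (fun t : ℝ => Hfac ℓ ((t : ℂ) + (y : ℂ) * Complex.I) w *
        ((((t - w.re) / (2 * y * w.im) : ℝ) : ℂ) * p' (rhoInv ((t : ℂ) + (y : ℂ) * Complex.I) w)
          + p (rhoInv ((t : ℂ) + (y : ℂ) * Complex.I) w) *
            (2 * Complex.I * (ℓ : ℂ) * ((y + w.im : ℝ) : ℂ) /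
              ((((t - w.re)^2 + (y + w.im)^2 : ℝ)) : ℂ)))) :=
    hevρ.mono (fun t ht => (hasDerivAt_F_x ℓ w hw p p' hp y hy t ht).deriv)
  have hH := hasDerivAt_Hfac_x ℓ w hw y hy x
  have haux1 : HasDerivAt (fun t : ℝ => (((t - w.re) / (2 * y * w.im) : ℝ) : ℂ))
      (((1 / (2 * y * w.im) : ℝ)) : ℂ) x := by
    have h := ((hasDerivAt_id x).sub_const w.re).div_const (2 * y * w.im)
    simp only [id_eq] at h
    exact h.ofReal_comp
  have haux2 : HasDerivAt (fun t : ℝ => p' (rhoInv ((t : ℂ) + (y : ℂ) * Complex.I) w))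
      (((x - w.re) / (2 * y * w.im)) • p'' (rhoInv ((x : ℂ) + (y : ℂ) * Complex.I) w)) x :=
    (hp' _ hρ).scomp x (hasDerivAt_rho_x w y x)
  have haux3 : HasDerivAt (fun t : ℝ => p (rhoInv ((t : ℂ) + (y : ℂ) * Complex.I) w))
      (((x - w.re) / (2 * y * w.im)) • p' (rhoInv ((x : ℂ) + (y : ℂ) * Complex.I) w)) x :=
    (hp _ hρ).scomp x (hasDerivAt_rho_x w y x)
  have hdenx : HasDerivAt (fun t : ℝ => ((((t - w.re)^2 + (y + w.im)^2 : ℝ)) : ℂ))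
      (((2 * (x - w.re) : ℝ)) : ℂ) x := by
    have h : HasDerivAt (fun t : ℝ => (t - w.re)^2 + (y + w.im)^2) (2 * (x - w.re)) x := by
      have h0 := (((hasDerivAt_id x).sub_const w.re).pow 2).add_const ((y + w.im)^2)
      simp only [id_eq] at h0
      refine h0.congr_deriv ?_
      push_cast
      ring
    exact h.ofReal_comp
  have hgx : HasDerivAt (fun t : ℝ => 2 * Complex.I * (ℓ : ℂ) * ((y + w.im : ℝ) : ℂ) /
        ((((t - w.re)^2 + (y + w.im)^2 : ℝ)) : ℂ))
      ((0 * ((((x - w.re)^2 + (y + w.im)^2 : ℝ)) : ℂ) -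
          2 * Complex.I * (ℓ : ℂ) * ((y + w.im : ℝ) : ℂ) * (((2 * (x - w.re) : ℝ)) : ℂ)) /
        ((((x - w.re)^2 + (y + w.im)^2 : ℝ)) : ℂ) ^ 2) x :=
    (hasDerivAt_const x _).div hdenx hD0
  have hψ := (haux1.mul haux2).add (haux3.mul hgx)
  have hbig := hH.mul hψ
  have hd2x := hev.deriv_eq.trans hbig.deriv
  -- second derivative in y
  have hevρy : ∀ᶠ t : ℝ in nhds y, 0 < rhoInv ((x : ℂ) + (t : ℂ) * Complex.I) w :=
    (hasDerivAt_rho_y w hw x y hy).continuousAt.eventually (eventually_gt_nhds hρ)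
  have hevy : (fun y' : ℝ => deriv (fun y'' : ℝ => radialF p ℓ w x y'') y') =ᶠ[nhds y]
      (fun t : ℝ => Hfac ℓ ((x : ℂ) + (t : ℂ) * Complex.I) w *
        ((((2 * (t - w.im) * t - ((x - w.re)^2 + (t - w.im)^2)) / (4 * w.im * t^2) : ℝ) : ℂ) *
            p' (rhoInv ((x : ℂ) + (t : ℂ) * Complex.I) w)
          + p (rhoInv ((x : ℂ) + (t : ℂ) * Complex.I) w) *
            (-2 * Complex.I * (ℓ : ℂ) * ((x - w.re : ℝ) : ℂ) /
              ((((x - w.re)^2 + (t + w.im)^2 : ℝ)) : ℂ)))) :=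
    ((eventually_gt_nhds hy).and hevρy).mono
      (fun t ht => (hasDerivAt_F_y ℓ w hw p p' hp x t ht.1 ht.2).deriv)
  have hHy := hasDerivAt_Hfac_y ℓ w hw x y hy
  have haux1y : HasDerivAt
      (fun t : ℝ => (((2 * (t - w.im) * t - ((x - w.re)^2 + (t - w.im)^2)) / (4 * w.im * t^2) : ℝ) : ℂ))
      ((((2 * y) * (4 * w.im * y^2)
          - (2 * (y - w.im) * y - ((x - w.re)^2 + (y - w.im)^2)) * (4 * w.im * (2 * y)))
        / (4 * w.im * y^2)^2 : ℝ) : ℂ) y := by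
    have hnum : HasDerivAt (fun t : ℝ => 2 * (t - w.im) * t - ((x - w.re)^2 + (t - w.im)^2))
        (2 * y) y := by
      have ha := (((hasDerivAt_id y).sub_const w.im).const_mul 2).mul (hasDerivAt_id y)
      have hb := (((hasDerivAt_id y).sub_const w.im).pow 2).const_add ((x - w.re)^2)
      simp only [id_eq] at ha hb
      have hc := ha.sub hb
      refine hc.congr_deriv ?_
      push_cast
      ring
    have hden : HasDerivAt (fun t : ℝ => 4 * w.im * t^2) (4 * w.im * (2 * y)) y := by
      have h := (hasDerivAt_pow 2 y).const_mul (4 * w.im)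
      refine h.congr_deriv ?_
      push_cast
      ring
    have hden0 : 4 * w.im * y^2 ≠ 0 := by positivity
    exact (hnum.div hden hden0).ofReal_comp
  have haux2y : HasDerivAt (fun t : ℝ => p' (rhoInv ((x : ℂ) + (t : ℂ) * Complex.I) w))
      (((2 * (y - w.im) * y - ((x - w.re)^2 + (y - w.im)^2)) / (4 * w.im * y^2)) •
        p'' (rhoInv ((x : ℂ) + (y : ℂ) * Complex.I) w)) y :=
    (hp' _ hρ).scomp y (hasDerivAt_rho_y w hw x y hy)
  have haux3y : HasDerivAt (fun t : ℝ => p (rhoInv ((x : ℂ) + (t : ℂ) * Complex.I) w))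
      (((2 * (y - w.im) * y - ((x - w.re)^2 + (y - w.im)^2)) / (4 * w.im * y^2)) •
        p' (rhoInv ((x : ℂ) + (y : ℂ) * Complex.I) w)) y :=
    (hp _ hρ).scomp y (hasDerivAt_rho_y w hw x y hy)
  have hdeny : HasDerivAt (fun t : ℝ => ((((x - w.re)^2 + (t + w.im)^2 : ℝ)) : ℂ))
      (((2 * (y + w.im) : ℝ)) : ℂ) y := by
    have h : HasDerivAt (fun t : ℝ => (x - w.re)^2 + (t + w.im)^2) (2 * (y + w.im)) y := by
      have h0 := (((hasDerivAt_id y).add_const w.im).pow 2).const_add ((x - w.re)^2)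
      simp only [id_eq] at h0
      refine h0.congr_deriv ?_
      push_cast
      ring
    exact h.ofReal_comp
  have hgy : HasDerivAt (fun t : ℝ => -2 * Complex.I * (ℓ : ℂ) * ((x - w.re : ℝ) : ℂ) /
        ((((x - w.re)^2 + (t + w.im)^2 : ℝ)) : ℂ))
      ((0 * ((((x - w.re)^2 + (y + w.im)^2 : ℝ)) : ℂ) -
          -2 * Complex.I * (ℓ : ℂ) * ((x - w.re : ℝ) : ℂ) * (((2 * (y + w.im) : ℝ)) : ℂ)) /
        ((((x - w.re)^2 + (y + w.im)^2 : ℝ)) : ℂ) ^ 2) y :=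
    (hasDerivAt_const y _).div hdeny hD0
  have hψy := (haux1y.mul haux2y).add (haux3y.mul hgy)
  have hbigy := hHy.mul hψy
  have hd2y := hevy.deriv_eq.trans hbigy.deriv
  rw [hd1, hd2x, hd2y]
  simp only [Complex.real_smul, Pi.mul_apply, Pi.add_apply]
  have hy0 : (y : ℂ) ≠ 0 := by exact_mod_cast hy.ne'
  have hv0 : ((w.im : ℝ) : ℂ) ≠ 0 := by exact_mod_cast hw.ne'
  have hD0' : ((x : ℂ) - (w.re : ℂ))^2 + ((y : ℂ) + (w.im : ℂ))^2 ≠ 0 := by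
    push_cast at hD0; exact hD0
  have hrho1 : ((rhoInv ((x : ℂ) + (y : ℂ) * Complex.I) w : ℝ) : ℂ) + 1
      = ((((x - w.re)^2 + (y + w.im)^2 : ℝ)) : ℂ) / ((4 * y * w.im : ℝ) : ℂ) := by
    rw [rho_eq w x y]
    have h4 : ((4 * y * w.im : ℝ) : ℂ) ≠ 0 := by
      push_cast
      intro h
      apply hy0
      have := mul_ne_zero (mul_ne_zero (by norm_num : (4:ℂ) ≠ 0) hy0) hv0
      exact absurd h (by push_cast at this ⊢; exact this)
    push_cast at h4 ⊢
    field_simp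
    ring
  have hyne : y ≠ 0 := hy.ne'
  have hvne : w.im ≠ 0 := hw.ne'
  have hDne : (x - w.re)^2 + (y + w.im)^2 ≠ 0 := hD.ne'
  -- coefficient of p''
  have h2 : -(y : ℂ)^2 * ((((x - w.re) / (2 * y * w.im) : ℝ) : ℂ) * ((((x - w.re) / (2 * y * w.im) : ℝ) : ℂ) )
        + (((2 * (y - w.im) * y - ((x - w.re)^2 + (y - w.im)^2)) / (4 * w.im * y^2) : ℝ) : ℂ) *
          (((2 * (y - w.im) * y - ((x - w.re)^2 + (y - w.im)^2)) / (4 * w.im * y^2) : ℝ) : ℂ))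
      = -(((rhoInv ((x : ℂ) + (y : ℂ) * Complex.I) w ^ 2 +
            rhoInv ((x : ℂ) + (y : ℂ) * Complex.I) w : ℝ) : ℂ)) := by
    have h2r : -(y^2) * ((x - w.re) / (2 * y * w.im) * ((x - w.re) / (2 * y * w.im))
          + ((2 * (y - w.im) * y - ((x - w.re)^2 + (y - w.im)^2)) / (4 * w.im * y^2)) *
            ((2 * (y - w.im) * y - ((x - w.re)^2 + (y - w.im)^2)) / (4 * w.im * y^2)))
        = -((rhoInv ((x : ℂ) + (y : ℂ) * Complex.I) w)^2
            + rhoInv ((x : ℂ) + (y : ℂ) * Complex.I) w) := by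
      rw [rho_eq w x y]
      field_simp
      ring
    calc -(y : ℂ)^2 * ((((x - w.re) / (2 * y * w.im) : ℝ) : ℂ) * ((((x - w.re) / (2 * y * w.im) : ℝ) : ℂ) )
        + (((2 * (y - w.im) * y - ((x - w.re)^2 + (y - w.im)^2)) / (4 * w.im * y^2) : ℝ) : ℂ) *
          (((2 * (y - w.im) * y - ((x - w.re)^2 + (y - w.im)^2)) / (4 * w.im * y^2) : ℝ) : ℂ))
        = ((-(y^2) * ((x - w.re) / (2 * y * w.im) * ((x - w.re) / (2 * y * w.im))
          + ((2 * (y - w.im) * y - ((x - w.re)^2 + (y - w.im)^2)) / (4 * w.im * y^2)) *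
            ((2 * (y - w.im) * y - ((x - w.re)^2 + (y - w.im)^2)) / (4 * w.im * y^2))) : ℝ) : ℂ) := by
          push_cast; ring
      _ = ((-((rhoInv ((x : ℂ) + (y : ℂ) * Complex.I) w)^2
            + rhoInv ((x : ℂ) + (y : ℂ) * Complex.I) w) : ℝ) : ℂ) := by rw [h2r]
      _ = -(((rhoInv ((x : ℂ) + (y : ℂ) * Complex.I) w ^ 2 +
            rhoInv ((x : ℂ) + (y : ℂ) * Complex.I) w : ℝ) : ℂ)) := by push_cast; ring
  -- abbreviating real expressions purely textually
  have h1 : -(y : ℂ)^2 * (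
        (2 * Complex.I * (ℓ : ℂ) * ((y + w.im : ℝ) : ℂ) / ((((x - w.re)^2 + (y + w.im)^2 : ℝ)) : ℂ)) *
            (((x - w.re) / (2 * y * w.im) : ℝ) : ℂ)
        + ((1 / (2 * y * w.im) : ℝ) : ℂ)
        + (((x - w.re) / (2 * y * w.im) : ℝ) : ℂ) *
            (2 * Complex.I * (ℓ : ℂ) * ((y + w.im : ℝ) : ℂ) / ((((x - w.re)^2 + (y + w.im)^2 : ℝ)) : ℂ))
        + (-2 * Complex.I * (ℓ : ℂ) * ((x - w.re : ℝ) : ℂ) / ((((x - w.re)^2 + (y + w.im)^2 : ℝ)) : ℂ)) *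
            (((2 * (y - w.im) * y - ((x - w.re)^2 + (y - w.im)^2)) / (4 * w.im * y^2) : ℝ) : ℂ)
        + ((((2 * y) * (4 * w.im * y^2)
            - (2 * (y - w.im) * y - ((x - w.re)^2 + (y - w.im)^2)) * (4 * w.im * (2 * y)))
          / (4 * w.im * y^2)^2 : ℝ) : ℂ)
        + (((2 * (y - w.im) * y - ((x - w.re)^2 + (y - w.im)^2)) / (4 * w.im * y^2) : ℝ) : ℂ) *
            (-2 * Complex.I * (ℓ : ℂ) * ((x - w.re : ℝ) : ℂ) / ((((x - w.re)^2 + (y + w.im)^2 : ℝ)) : ℂ)))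
      + 2 * Complex.I * (ℓ : ℂ) * (y : ℂ) * (((x - w.re) / (2 * y * w.im) : ℝ) : ℂ)
      = -(((2 * rhoInv ((x : ℂ) + (y : ℂ) * Complex.I) w + 1 : ℝ) : ℂ)) := by
    have hApart : -(y^2) * (1 / (2 * y * w.im)
          + ((2 * y) * (4 * w.im * y^2)
            - (2 * (y - w.im) * y - ((x - w.re)^2 + (y - w.im)^2)) * (4 * w.im * (2 * y)))
          / (4 * w.im * y^2)^2)
        = -(2 * rhoInv ((x : ℂ) + (y : ℂ) * Complex.I) w + 1) := by
      rw [rho_eq w x y]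
      field_simp
      ring
    have hBpart : -(y^2) * (2 * (y + w.im) / ((x - w.re)^2 + (y + w.im)^2) *
            ((x - w.re) / (2 * y * w.im))
          + ((x - w.re) / (2 * y * w.im)) * (2 * (y + w.im) / ((x - w.re)^2 + (y + w.im)^2))
          + (-2 * (x - w.re) / ((x - w.re)^2 + (y + w.im)^2)) *
            ((2 * (y - w.im) * y - ((x - w.re)^2 + (y - w.im)^2)) / (4 * w.im * y^2))
          + ((2 * (y - w.im) * y - ((x - w.re)^2 + (y - w.im)^2)) / (4 * w.im * y^2)) *
            (-2 * (x - w.re) / ((x - w.re)^2 + (y + w.im)^2)))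
        + 2 * y * ((x - w.re) / (2 * y * w.im)) = 0 := by
      field_simp
      ring
    calc -(y : ℂ)^2 * (
        (2 * Complex.I * (ℓ : ℂ) * ((y + w.im : ℝ) : ℂ) / ((((x - w.re)^2 + (y + w.im)^2 : ℝ)) : ℂ)) *
            (((x - w.re) / (2 * y * w.im) : ℝ) : ℂ)
        + ((1 / (2 * y * w.im) : ℝ) : ℂ)
        + (((x - w.re) / (2 * y * w.im) : ℝ) : ℂ) *
            (2 * Complex.I * (ℓ : ℂ) * ((y + w.im : ℝ) : ℂ) / ((((x - w.re)^2 + (y + w.im)^2 : ℝ)) : ℂ))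
        + (-2 * Complex.I * (ℓ : ℂ) * ((x - w.re : ℝ) : ℂ) / ((((x - w.re)^2 + (y + w.im)^2 : ℝ)) : ℂ)) *
            (((2 * (y - w.im) * y - ((x - w.re)^2 + (y - w.im)^2)) / (4 * w.im * y^2) : ℝ) : ℂ)
        + ((((2 * y) * (4 * w.im * y^2)
            - (2 * (y - w.im) * y - ((x - w.re)^2 + (y - w.im)^2)) * (4 * w.im * (2 * y)))
          / (4 * w.im * y^2)^2 : ℝ) : ℂ)
        + (((2 * (y - w.im) * y - ((x - w.re)^2 + (y - w.im)^2)) / (4 * w.im * y^2) : ℝ) : ℂ) *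
            (-2 * Complex.I * (ℓ : ℂ) * ((x - w.re : ℝ) : ℂ) / ((((x - w.re)^2 + (y + w.im)^2 : ℝ)) : ℂ)))
      + 2 * Complex.I * (ℓ : ℂ) * (y : ℂ) * (((x - w.re) / (2 * y * w.im) : ℝ) : ℂ)
        = ((-(y^2) * (1 / (2 * y * w.im)
          + ((2 * y) * (4 * w.im * y^2)
            - (2 * (y - w.im) * y - ((x - w.re)^2 + (y - w.im)^2)) * (4 * w.im * (2 * y)))
          / (4 * w.im * y^2)^2) : ℝ) : ℂ)
          + Complex.I * (ℓ : ℂ) *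
          ((-(y^2) * (2 * (y + w.im) / ((x - w.re)^2 + (y + w.im)^2) *
            ((x - w.re) / (2 * y * w.im))
          + ((x - w.re) / (2 * y * w.im)) * (2 * (y + w.im) / ((x - w.re)^2 + (y + w.im)^2))
          + (-2 * (x - w.re) / ((x - w.re)^2 + (y + w.im)^2)) *
            ((2 * (y - w.im) * y - ((x - w.re)^2 + (y - w.im)^2)) / (4 * w.im * y^2))
          + ((2 * (y - w.im) * y - ((x - w.re)^2 + (y - w.im)^2)) / (4 * w.im * y^2)) *
            (-2 * (x - w.re) / ((x - w.re)^2 + (y + w.im)^2)))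
        + 2 * y * ((x - w.re) / (2 * y * w.im)) : ℝ) : ℂ) := by
          push_cast
          ring
      _ = -(((2 * rhoInv ((x : ℂ) + (y : ℂ) * Complex.I) w + 1 : ℝ) : ℂ)) := by
          rw [hApart, hBpart]
          push_cast
          ring
  have hρ1 : rhoInv ((x : ℂ) + (y : ℂ) * Complex.I) w + 1 ≠ 0 := by positivity
  have h0 : -(y : ℂ)^2 * (
        (2 * Complex.I * (ℓ : ℂ) * ((y + w.im : ℝ) : ℂ) / ((((x - w.re)^2 + (y + w.im)^2 : ℝ)) : ℂ)) *
          (2 * Complex.I * (ℓ : ℂ) * ((y + w.im : ℝ) : ℂ) / ((((x - w.re)^2 + (y + w.im)^2 : ℝ)) : ℂ))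
        + (0 * ((((x - w.re)^2 + (y + w.im)^2 : ℝ)) : ℂ) -
            2 * Complex.I * (ℓ : ℂ) * ((y + w.im : ℝ) : ℂ) * (((2 * (x - w.re) : ℝ)) : ℂ)) /
          ((((x - w.re)^2 + (y + w.im)^2 : ℝ)) : ℂ) ^ 2
        + (-2 * Complex.I * (ℓ : ℂ) * ((x - w.re : ℝ) : ℂ) / ((((x - w.re)^2 + (y + w.im)^2 : ℝ)) : ℂ)) *
          (-2 * Complex.I * (ℓ : ℂ) * ((x - w.re : ℝ) : ℂ) / ((((x - w.re)^2 + (y + w.im)^2 : ℝ)) : ℂ))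
        + (0 * ((((x - w.re)^2 + (y + w.im)^2 : ℝ)) : ℂ) -
            -2 * Complex.I * (ℓ : ℂ) * ((x - w.re : ℝ) : ℂ) * (((2 * (y + w.im) : ℝ)) : ℂ)) /
          ((((x - w.re)^2 + (y + w.im)^2 : ℝ)) : ℂ) ^ 2)
      + 2 * Complex.I * (ℓ : ℂ) * (y : ℂ) *
        (2 * Complex.I * (ℓ : ℂ) * ((y + w.im : ℝ) : ℂ) / ((((x - w.re)^2 + (y + w.im)^2 : ℝ)) : ℂ))
      = -((ℓ : ℂ) ^ 2 / (((rhoInv ((x : ℂ) + (y : ℂ) * Complex.I) w : ℝ) : ℂ) + 1)) := by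
    have hS : -(y^2) * ((2 * (y + w.im) / ((x - w.re)^2 + (y + w.im)^2)) *
            (2 * (y + w.im) / ((x - w.re)^2 + (y + w.im)^2))
          + (2 * (x - w.re) / ((x - w.re)^2 + (y + w.im)^2)) *
            (2 * (x - w.re) / ((x - w.re)^2 + (y + w.im)^2)))
        + 2 * y * (2 * (y + w.im) / ((x - w.re)^2 + (y + w.im)^2))
        = 1 / (rhoInv ((x : ℂ) + (y : ℂ) * Complex.I) w + 1) := by
      rw [rho_eq w x y] at hρ1 ⊢
      field_simp
      ring
    have hT2 : -(y^2) * ((-(2 * (y + w.im) * (2 * (x - w.re)))) / ((x - w.re)^2 + (y + w.im)^2)^2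
          + (2 * (x - w.re) * (2 * (y + w.im))) / ((x - w.re)^2 + (y + w.im)^2)^2) = (0:ℝ) := by
      ring
    calc -(y : ℂ)^2 * (
        (2 * Complex.I * (ℓ : ℂ) * ((y + w.im : ℝ) : ℂ) / ((((x - w.re)^2 + (y + w.im)^2 : ℝ)) : ℂ)) *
          (2 * Complex.I * (ℓ : ℂ) * ((y + w.im : ℝ) : ℂ) / ((((x - w.re)^2 + (y + w.im)^2 : ℝ)) : ℂ))
        + (0 * ((((x - w.re)^2 + (y + w.im)^2 : ℝ)) : ℂ) -
            2 * Complex.I * (ℓ : ℂ) * ((y + w.im : ℝ) : ℂ) * (((2 * (x - w.re) : ℝ)) : ℂ)) /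
          ((((x - w.re)^2 + (y + w.im)^2 : ℝ)) : ℂ) ^ 2
        + (-2 * Complex.I * (ℓ : ℂ) * ((x - w.re : ℝ) : ℂ) / ((((x - w.re)^2 + (y + w.im)^2 : ℝ)) : ℂ)) *
          (-2 * Complex.I * (ℓ : ℂ) * ((x - w.re : ℝ) : ℂ) / ((((x - w.re)^2 + (y + w.im)^2 : ℝ)) : ℂ))
        + (0 * ((((x - w.re)^2 + (y + w.im)^2 : ℝ)) : ℂ) -
            -2 * Complex.I * (ℓ : ℂ) * ((x - w.re : ℝ) : ℂ) * (((2 * (y + w.im) : ℝ)) : ℂ)) /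
          ((((x - w.re)^2 + (y + w.im)^2 : ℝ)) : ℂ) ^ 2)
      + 2 * Complex.I * (ℓ : ℂ) * (y : ℂ) *
        (2 * Complex.I * (ℓ : ℂ) * ((y + w.im : ℝ) : ℂ) / ((((x - w.re)^2 + (y + w.im)^2 : ℝ)) : ℂ))
        = Complex.I^2 * (ℓ : ℂ)^2 *
            ((-(y^2) * ((2 * (y + w.im) / ((x - w.re)^2 + (y + w.im)^2)) *
            (2 * (y + w.im) / ((x - w.re)^2 + (y + w.im)^2))
          + (2 * (x - w.re) / ((x - w.re)^2 + (y + w.im)^2)) *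
            (2 * (x - w.re) / ((x - w.re)^2 + (y + w.im)^2)))
        + 2 * y * (2 * (y + w.im) / ((x - w.re)^2 + (y + w.im)^2)) : ℝ) : ℂ)
          + Complex.I * (ℓ : ℂ) *
            ((-(y^2) * ((-(2 * (y + w.im) * (2 * (x - w.re)))) / ((x - w.re)^2 + (y + w.im)^2)^2
          + (2 * (x - w.re) * (2 * (y + w.im))) / ((x - w.re)^2 + (y + w.im)^2)^2) : ℝ) : ℂ) := by
          push_cast
          ring
      _ = -((ℓ : ℂ) ^ 2 / (((rhoInv ((x : ℂ) + (y : ℂ) * Complex.I) w : ℝ) : ℂ) + 1)) := by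
          rw [hS, hT2, Complex.I_sq]
          push_cast
          rw [one_div]
          field_simp; ring
  linear_combination (Hfac ℓ ((x : ℂ) + (y : ℂ) * Complex.I) w) *
    (p'' (rhoInv ((x : ℂ) + (y : ℂ) * Complex.I) w) * h2
      + p' (rhoInv ((x : ℂ) + (y : ℂ) * Complex.I) w) * h1
      + p (rhoInv ((x : ℂ) + (y : ℂ) * Complex.I) w) * h0)
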